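/- Let g ≥ 1 and let M be a g×g symmetric integer matrix with M³ = M. Define the 2g×2g integer matrix Σ_M = (−M I_g; −(I_g + M²) M) in g×g block form. Then Σ_M is symplectic, i.e. ᵗΣ_M J_g Σ_M = J_g, and Σ_M² = −I_{2g}; in particular Σ_M is invertible with Σ_M⁻¹ = −Σ_M. -/

import Mathlib

open Matrix

/-- The symplectic matrix `J_g = (0 I; -I 0)` over `ℤ`. -/
def Jmat (g : ℕ) : Matrix (Fin g ⊕ Fin g) (Fin g ⊕ Fin g) ℤ := fromBlocks 0 1 (-1) 0

/-- The matrix `Σ_M = (-M I; -(I + M²) M)`. -/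
def SigmaM (g : ℕ) (M : Matrix (Fin g) (Fin g) ℤ) :
    Matrix (Fin g ⊕ Fin g) (Fin g ⊕ Fin g) ℤ := fromBlocks (-M) 1 (-(1 + M ^ 2)) M

/-- For `M` symmetric with `M³ = M`, `Σ_M` is symplectic, `Σ_M² = -I`, and
`Σ_M` is invertible with `Σ_M⁻¹ = -Σ_M`. -/
theorem stmt_3 (g : ℕ) (hg : 1 ≤ g) (M : Matrix (Fin g) (Fin g) ℤ)
    (hsym : Mᵀ = M) (hM3 : M ^ 3 = M) :
    (SigmaM g M)ᵀ * Jmat g * SigmaM g M = Jmat g ∧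
    SigmaM g M ^ 2 = -1 ∧
    IsUnit (SigmaM g M).det ∧
    (SigmaM g M)⁻¹ = -SigmaM g M := by
  have hsq : SigmaM g M ^ 2 = -1 := by
    rw [sq, SigmaM, fromBlocks_multiply]
    have : (-1 : Matrix (Fin g ⊕ Fin g) (Fin g ⊕ Fin g) ℤ) =
        fromBlocks (-1) 0 0 (-1) := by
      simp [← fromBlocks_one, fromBlocks_neg]
    rw [this, fromBlocks_inj]
    exact ⟨by noncomm_ring, by noncomm_ring, by noncomm_ring, by noncomm_ring⟩
  have hmul : SigmaM g M * (-SigmaM g M) = 1 := by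
    have := hsq
    rw [sq] at this
    rw [mul_neg, this, neg_neg]
  refine ⟨?_, hsq, ?_, ?_⟩
  · rw [SigmaM, Jmat, fromBlocks_transpose, fromBlocks_multiply, fromBlocks_multiply]
    have hsym2 : (M ^ 2)ᵀ = M ^ 2 := by rw [sq, transpose_mul, hsym]
    rw [fromBlocks_inj]
    refine ⟨?_, ?_, ?_, ?_⟩ <;>
      simp [hsym, hsym2, transpose_neg, transpose_add, transpose_one] <;> noncomm_ring
  · exact IsUnit.of_mul_eq_one _ (by rw [← det_mul, hmul, det_one])
  · exact inv_eq_right_inv hmul
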